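/- Let K be a symmetric convex body in ℝ^n of volume 1. Then n·|K°| ≤ liminf_{p→∞} (p/log p)·(|Z_p(K)°| − |K°|) and limsup_{p→∞} (p/log p)·(|Z_p(K)°| − |K°|) ≤ n²·|K°|. -/

import Mathlib

open MeasureTheory Filter Set Metric
open scoped RealInnerProductSpace Topology ENNReal NNReal
open scoped Pointwise

noncomputable section

/-- Euclidean space `ℝ^n`. -/
abbrev Euc (n : ℕ) := EuclideanSpace ℝ (Fin n)

/-- The support function `h_K(θ) = sup_{x ∈ K} ⟨x, θ⟩` of a set `K ⊆ ℝ^n`. -/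
noncomputable def suppFn {n : ℕ} (K : Set (Euc n)) (θ : Euc n) : ℝ :=
  sSup ((fun x => ⟪x, θ⟫) '' K)

/-- The `L_p`-centroid body `Z_p(K)`: the convex body whose support function is
`θ ↦ (∫_K |⟨x,θ⟫|^p dx)^{1/p}`, realized as the corresponding intersection of half-spaces. -/
noncomputable def ZpBody {n : ℕ} (K : Set (Euc n)) (p : ℝ) : Set (Euc n) :=
  {y | ∀ v : Euc n, ⟪y, v⟫ ≤ (∫ x in K, |⟪x, v⟫| ^ p) ^ (1 / p)}

/-- The polar body `C° = {y : ⟨x,y⟩ ≤ 1 for all x ∈ C}`. -/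
def polarSet {n : ℕ} (C : Set (Euc n)) : Set (Euc n) :=
  {y | ∀ x ∈ C, ⟪x, y⟫ ≤ 1}


lemma exp_helper (x : ℝ → ℝ) (L : ℝ) (hx : Tendsto x atTop (𝓝 0))
    (h : Tendsto (fun p => x p * (p / Real.log p)) atTop (𝓝 L)) :
    Tendsto (fun p => (Real.exp (x p) - 1) * (p / Real.log p)) atTop (𝓝 L) := by
  have key : Tendsto (fun p => (Real.exp (x p) - 1 - x p) * (p / Real.log p)) atTop (𝓝 0) := by
    have hg : Tendsto (fun p => |x p| * |x p * (p / Real.log p)|) atTop (𝓝 0) := by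
      have := (hx.abs).mul (h.abs)
      simpa using this
    apply squeeze_zero_norm' ?_ hg
    filter_upwards [hx.eventually (Metric.closedBall_mem_nhds (0:ℝ) one_pos)] with p hp
    rw [Real.dist_eq, sub_zero] at hp
    have h1 : |Real.exp (x p) - 1 - x p| ≤ (x p) ^ 2 := Real.abs_exp_sub_one_sub_id_le hp
    have : ‖(Real.exp (x p) - 1 - x p) * (p / Real.log p)‖
        = |Real.exp (x p) - 1 - x p| * |p / Real.log p| := by
      rw [Real.norm_eq_abs, abs_mul]
    rw [this, abs_mul]
    calc |Real.exp (x p) - 1 - x p| * |p / Real.log p| ≤ (x p)^2 * |p / Real.log p| := by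
          apply mul_le_mul_of_nonneg_right h1 (abs_nonneg _)
      _ = |x p| * (|x p| * |p / Real.log p|) := by rw [sq_abs (x p) |>.symm]; ring
  have := key.add h
  simp only [zero_add] at this
  convert this using 2 with p
  ring

lemma tendsto_log_div_self : Tendsto (fun p : ℝ => Real.log p / p) atTop (𝓝 0) := by
  simpa using Real.isLittleO_log_id_atTop.tendsto_div_nhds_zero

lemma tendsto_loglog : Tendsto (fun p : ℝ => Real.log (Real.log p) / Real.log p) atTop (𝓝 0) :=
  tendsto_log_div_self.comp Real.tendsto_log_atTop

/-- `t p = (log p)^2 / p`. -/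
def tlog (p : ℝ) : ℝ := Real.log p ^ 2 / p

lemma tlog_tendsto : Tendsto tlog atTop (𝓝 0) := by
  have h2 : Tendsto (fun p : ℝ => (Real.log p / p ^ (1/2 : ℝ)) ^ 2) atTop (𝓝 0) := by
    have := (isLittleO_log_rpow_atTop (by norm_num : (0:ℝ) < 1/2)).tendsto_div_nhds_zero
    simpa using this.pow 2
  apply h2.congr'
  filter_upwards [eventually_gt_atTop (0:ℝ)] with p hp
  rw [tlog, div_pow, ← Real.rpow_natCast (p ^ (1/2:ℝ)) 2, ← Real.rpow_mul hp.le]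
  norm_num

lemma tendsto_log_tlog : Tendsto (fun p => Real.log (tlog p) / Real.log p) atTop (𝓝 (-1)) := by
  have h : Tendsto (fun p : ℝ => 2 * (Real.log (Real.log p) / Real.log p) - 1) atTop (𝓝 (-1)) := by
    have := tendsto_loglog.const_mul (2:ℝ)
    have h2 := this.sub_const (1:ℝ)
    simpa using h2
  apply h.congr'
  filter_upwards [Real.tendsto_log_atTop.eventually_gt_atTop 0, eventually_gt_atTop (0:ℝ)]
    with p hlog hp
  rw [tlog, Real.log_div (by positivity) (ne_of_gt hp), Real.log_pow]
  push_cast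
  field_simp

lemma tendsto_logB (A : ℝ) (hA : 1 ≤ A) :
    Tendsto (fun p : ℝ => Real.log ((1 - tlog p) ^ p + A * tlog p) / Real.log p)
      atTop (𝓝 (-1)) := by
  have hA0 : (0:ℝ) < A := lt_of_lt_of_le one_pos hA
  have haux : ∀ c : ℝ, 0 < c → Tendsto (fun p : ℝ => (Real.log c + Real.log (tlog p)) / Real.log p)
      atTop (𝓝 (-1)) := by
    intro c hc
    have h1 : Tendsto (fun p : ℝ => Real.log c / Real.log p + Real.log (tlog p) / Real.log p)
        atTop (𝓝 (0 + -1)) :=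
      (Tendsto.div_atTop tendsto_const_nhds Real.tendsto_log_atTop).add tendsto_log_tlog
    simp only [zero_add] at h1
    exact h1.congr fun p => (add_div _ _ _).symm
  apply tendsto_of_tendsto_of_tendsto_of_le_of_le' (haux A hA0) (haux (A+1) (by linarith))
  · filter_upwards [Real.tendsto_log_atTop.eventually_ge_atTop 1, eventually_gt_atTop (0:ℝ),
      tlog_tendsto.eventually_lt_const (by norm_num : (0:ℝ) < 1/2)] with p hlog hp ht2
    have hlp : (0:ℝ) < Real.log p := lt_of_lt_of_le one_pos hlog
    have ht0 : 0 < tlog p := by rw [tlog]; positivity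
    have hB : A * tlog p ≤ (1 - tlog p) ^ p + A * tlog p := by
      have : (0:ℝ) ≤ (1 - tlog p) ^ p := Real.rpow_nonneg (by linarith) p
      linarith
    have hlogle := Real.log_le_log (by positivity) hB
    rw [Real.log_mul (ne_of_gt hA0) (ne_of_gt ht0)] at hlogle
    exact (div_le_div_iff_of_pos_right hlp).mpr hlogle
  · filter_upwards [Real.tendsto_log_atTop.eventually_ge_atTop 1, eventually_gt_atTop (0:ℝ),
      tlog_tendsto.eventually_lt_const (by norm_num : (0:ℝ) < 1/2)] with p hlog hp ht2
    have hlp : (0:ℝ) < Real.log p := lt_of_lt_of_le one_pos hlog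
    have ht0 : 0 < tlog p := by rw [tlog]; positivity
    have hkey : (1 - tlog p) ^ p ≤ tlog p := by
      have h1t : (0:ℝ) < 1 - tlog p := by linarith
      rw [Real.rpow_def_of_pos h1t]
      have hq : Real.log (1 - tlog p) ≤ -(tlog p) := by
        have := Real.log_le_sub_one_of_pos h1t
        linarith
      have h2 : Real.log (1 - tlog p) * p ≤ -(tlog p) * p :=
        mul_le_mul_of_nonneg_right hq hp.le
      have h3 : -(tlog p) * p = -(Real.log p ^ 2) := by
        rw [tlog]; field_simp
      have h4 : Real.exp (Real.log (1 - tlog p) * p) ≤ Real.exp (-(Real.log p ^ 2)) :=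
        Real.exp_le_exp.mpr (h3 ▸ h2)
      have h5 : Real.exp (-(Real.log p ^ 2)) ≤ Real.exp (-(Real.log p)) := by
        apply Real.exp_le_exp.mpr
        nlinarith
      have h6 : Real.exp (-(Real.log p)) = p⁻¹ := by
        rw [Real.exp_neg, Real.exp_log hp]
      have h7 : p⁻¹ ≤ tlog p := by
        rw [tlog, le_div_iff₀ hp]
        have : p⁻¹ * p = 1 := inv_mul_cancel₀ (ne_of_gt hp)
        nlinarith
      linarith
    have hB : (1 - tlog p) ^ p + A * tlog p ≤ (A + 1) * tlog p := by nlinarith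
    have hpos1 : (0:ℝ) < (1 - tlog p) ^ p + A * tlog p := by
      have h1 : (0:ℝ) ≤ (1 - tlog p) ^ p := Real.rpow_nonneg (by linarith) p
      nlinarith
    have hlogle := Real.log_le_log hpos1 hB
    rw [Real.log_mul (by linarith) (ne_of_gt ht0)] at hlogle
    exact (div_le_div_iff_of_pos_right hlp).mpr hlogle

lemma tendsto_LB (n : ℕ) (A : ℝ) (hA : 1 ≤ A) :
    Tendsto (fun p : ℝ => (p / Real.log p) *
      (((((1 - tlog p) ^ p + A * tlog p) ^ (1/p))⁻¹) ^ n - 1)) atTop (𝓝 n) := by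
  have hA0 : (0:ℝ) < A := lt_of_lt_of_le one_pos hA
  set B : ℝ → ℝ := fun p => (1 - tlog p) ^ p + A * tlog p with hBdef
  set x : ℝ → ℝ := fun p => -(n : ℝ) / p * Real.log (B p) with hxdef
  have hx : Tendsto x atTop (𝓝 0) := by
    have h1 : Tendsto (fun p => (-(n:ℝ)) * ((Real.log (B p) / Real.log p) * (Real.log p / p)))
        atTop (𝓝 ((-(n:ℝ)) * (-1 * 0))) :=
      ((tendsto_logB A hA).mul tendsto_log_div_self).const_mul _
    simp only [mul_zero, neg_mul, neg_zero] at h1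
    apply h1.congr'
    filter_upwards [Real.tendsto_log_atTop.eventually_ge_atTop 1, eventually_gt_atTop (0:ℝ)]
      with p hlog hp
    have hlp : (0:ℝ) < Real.log p := lt_of_lt_of_le one_pos hlog
    rw [hxdef]
    field_simp
    all_goals ring
  have hxl : Tendsto (fun p => x p * (p / Real.log p)) atTop (𝓝 n) := by
    have h1 : Tendsto (fun p => (-(n:ℝ)) * (Real.log (B p) / Real.log p))
        atTop (𝓝 ((-(n:ℝ)) * (-1))) := (tendsto_logB A hA).const_mul _
    simp only [mul_neg, neg_neg, mul_one] at h1
    apply h1.congr'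
    filter_upwards [Real.tendsto_log_atTop.eventually_ge_atTop 1, eventually_gt_atTop (0:ℝ)]
      with p hlog hp
    have hlp : (0:ℝ) < Real.log p := lt_of_lt_of_le one_pos hlog
    rw [hxdef]
    field_simp
    all_goals ring
  have hmain := exp_helper x n hx hxl
  apply hmain.congr'
  filter_upwards [Real.tendsto_log_atTop.eventually_ge_atTop 1, eventually_gt_atTop (0:ℝ),
    tlog_tendsto.eventually_lt_const (by norm_num : (0:ℝ) < 1/2)] with p hlog hp ht2
  have hlp : (0:ℝ) < Real.log p := lt_of_lt_of_le one_pos hlog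
  have ht0 : 0 < tlog p := by rw [tlog]; positivity
  have hBpos : 0 < B p := by
    have h1 : (0:ℝ) ≤ (1 - tlog p) ^ p := Real.rpow_nonneg (by linarith) p
    have h2 : 0 < A * tlog p := by positivity
    simp only [hBdef]; linarith
  have hexp : Real.exp (x p) = (((B p) ^ (1/p))⁻¹) ^ n := by
    have e1 : ((B p) ^ (1/p))⁻¹ = (B p) ^ (-(1/p)) := by
      rw [← Real.rpow_neg_one ((B p) ^ (1/p)), ← Real.rpow_mul hBpos.le]
      norm_num
    have e2 : (((B p) ^ (1/p))⁻¹) ^ n = (B p) ^ (-(1/p) * (n:ℝ)) := by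
      rw [e1, ← Real.rpow_natCast ((B p) ^ (-(1/p))) n, ← Real.rpow_mul hBpos.le]
    have e3 : x p = Real.log (B p) * (-(1/p) * (n:ℝ)) := by
      rw [hxdef]
      ring
    rw [e2, Real.rpow_def_of_pos hBpos, e3]
  rw [hexp]
  ring

lemma tendsto_LA (n : ℕ) :
    Tendsto (fun p : ℝ => (p / Real.log p) *
      ((((1 - 2/p) * (1/p) ^ ((n:ℝ)/p))⁻¹) ^ n - 1)) atTop (𝓝 ((n:ℝ)^2)) := by
  set x : ℝ → ℝ := fun p => (n:ℝ) * (-Real.log (1 - 2/p) + (n:ℝ)/p * Real.log p) with hxdef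
  have h2p : Tendsto (fun p : ℝ => 1 - 2/p) atTop (𝓝 1) := by
    have := Tendsto.div_atTop (tendsto_const_nhds (x := (2:ℝ))) tendsto_id
    have h2 := (tendsto_const_nhds (x := (1:ℝ))).sub this
    simpa using h2
  have hlog12 : Tendsto (fun p : ℝ => Real.log (1 - 2/p)) atTop (𝓝 0) := by
    have := (Real.continuousAt_log one_ne_zero).tendsto.comp h2p
    simpa [Function.comp_def] using this
  have hx : Tendsto x atTop (𝓝 0) := by
    have h1 : Tendsto (fun p : ℝ => (n:ℝ) * (-Real.log (1 - 2/p) + (n:ℝ) * (Real.log p / p)))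
        atTop (𝓝 ((n:ℝ) * (-0 + (n:ℝ) * 0))) :=
      ((hlog12.neg).add (tendsto_log_div_self.const_mul _)).const_mul _
    simp only [neg_zero, mul_zero, zero_add, add_zero] at h1
    apply h1.congr
    intro p
    rw [hxdef]
    ring
  have hxl : Tendsto (fun p => x p * (p / Real.log p)) atTop (𝓝 ((n:ℝ)^2)) := by
    have hsq : Tendsto (fun p : ℝ => (n:ℝ) * (-(p * Real.log (1 - 2/p)) / Real.log p))
        atTop (𝓝 0) := by
      apply tendsto_of_tendsto_of_tendsto_of_le_of_le'
        (tendsto_const_nhds (x := (0:ℝ)))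
        (Tendsto.div_atTop (tendsto_const_nhds (x := ((n:ℝ)*4))) Real.tendsto_log_atTop)
      · filter_upwards [Real.tendsto_log_atTop.eventually_ge_atTop 1, eventually_ge_atTop (4:ℝ)]
          with p hlog hp
        have hlp : (0:ℝ) < Real.log p := lt_of_lt_of_le one_pos hlog
        have h12 : (0:ℝ) < 1 - 2/p := by
          have : 2/p ≤ 2/4 := by apply div_le_div_of_nonneg_left <;> linarith
          linarith
        have : Real.log (1 - 2/p) ≤ 0 := Real.log_nonpos (by linarith) (by
          have : (0:ℝ) < 2/p := by positivity
          linarith)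
        have hp0 : (0:ℝ) < p := by linarith
        have hnum : 0 ≤ -(p * Real.log (1 - 2/p)) := by
          have := mul_nonpos_of_nonneg_of_nonpos hp0.le this
          linarith
        have hq : 0 ≤ -(p * Real.log (1 - 2/p)) / Real.log p := div_nonneg hnum hlp.le
        exact mul_nonneg (Nat.cast_nonneg n) hq
      · filter_upwards [Real.tendsto_log_atTop.eventually_ge_atTop 1, eventually_ge_atTop (4:ℝ)]
          with p hlog hp
        have hlp : (0:ℝ) < Real.log p := lt_of_lt_of_le one_pos hlog
        have hp0 : (0:ℝ) < p := by linarith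
        have h2p4 : 2/p ≤ 1/2 := by
          rw [div_le_div_iff₀ hp0 (by norm_num)]; linarith
        have h12 : (0:ℝ) < 1 - 2/p := by linarith
        -- -log(1-2/p) ≤ (2/p)/(1-2/p) ≤ 4/p
        have hinv : Real.log (1 - 2/p) = -Real.log (1 - 2/p)⁻¹ := by
          rw [Real.log_inv]; ring
        have hlb : Real.log (1 - 2/p)⁻¹ ≤ (1 - 2/p)⁻¹ - 1 :=
          Real.log_le_sub_one_of_pos (by positivity)
        have hhalf : (1:ℝ)/2 ≤ 1 - 2/p := by linarith
        have hinv2 : (1 - 2/p)⁻¹ ≤ 2 := by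
          have := one_div_le_one_div_of_le (by norm_num : (0:ℝ) < 1/2) hhalf
          rw [one_div] at this
          norm_num at this
          linarith
        have hub : (1 - 2/p)⁻¹ - 1 ≤ 4/p := by
          have hc : (1 - 2/p)⁻¹ * (1 - 2/p) = 1 := inv_mul_cancel₀ (ne_of_gt h12)
          have heq : (1 - 2/p)⁻¹ - 1 = (2/p) * (1 - 2/p)⁻¹ := by nlinarith [hc]
          have h2 : (2/p) * (1 - 2/p)⁻¹ ≤ (2/p) * 2 :=
            mul_le_mul_of_nonneg_left hinv2 (by positivity)
          rw [heq]
          calc (2/p) * (1 - 2/p)⁻¹ ≤ (2/p) * 2 := h2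
            _ = 4/p := by ring
        have this4 : -(p * Real.log (1 - 2/p)) ≤ 4 := by
          have h9 : -Real.log (1 - 2/p) ≤ 4/p := by
            rw [hinv, neg_neg]
            linarith
          have h10 := mul_le_mul_of_nonneg_left h9 hp0.le
          have h11 : p * (4/p) = 4 := by field_simp
          nlinarith
        rw [mul_div_assoc]
        gcongr
    have h1 : Tendsto (fun p : ℝ => (n:ℝ) * (-(p * Real.log (1 - 2/p)) / Real.log p) + (n:ℝ)^2)
        atTop (𝓝 (0 + (n:ℝ)^2)) := hsq.add_const _
    simp only [zero_add] at h1
    apply h1.congr'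
    filter_upwards [Real.tendsto_log_atTop.eventually_ge_atTop 1, eventually_gt_atTop (0:ℝ)]
      with p hlog hp
    have hlp : (0:ℝ) < Real.log p := lt_of_lt_of_le one_pos hlog
    rw [hxdef]
    field_simp
    all_goals ring
  have hmain := exp_helper x ((n:ℝ)^2) hx hxl
  apply hmain.congr'
  filter_upwards [Real.tendsto_log_atTop.eventually_ge_atTop 1, eventually_ge_atTop (4:ℝ)]
    with p hlog hp
  have hlp : (0:ℝ) < Real.log p := lt_of_lt_of_le one_pos hlog
  have hp0 : (0:ℝ) < p := by linarith
  have h12 : (0:ℝ) < 1 - 2/p := by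
    have : 2/p ≤ 2/4 := by apply div_le_div_of_nonneg_left <;> linarith
    linarith
  have hrp : (0:ℝ) < (1/p) ^ ((n:ℝ)/p) := Real.rpow_pos_of_pos (by positivity) _
  have hexp : Real.exp (x p) = (((1 - 2/p) * (1/p) ^ ((n:ℝ)/p))⁻¹) ^ n := by
    have hα : (1 - 2/p) * (1/p) ^ ((n:ℝ)/p)
        = Real.exp (Real.log (1 - 2/p) - (n:ℝ)/p * Real.log p) := by
      rw [Real.exp_sub, Real.exp_log h12]
      congr 1
      rw [Real.rpow_def_of_pos (by positivity : (0:ℝ) < 1/p)]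
      rw [one_div, Real.log_inv]
      rw [← Real.exp_neg]
      congr 1
      ring
    rw [hα, ← Real.exp_neg, ← Real.exp_nat_mul, hxdef]
    congr 1
    ring
  rw [hexp]
  ring


lemma coord_abs_le_norm {n : ℕ} (y : EuclideanSpace ℝ (Fin n)) (i : Fin n) : |y i| ≤ ‖y‖ := by
  have := EuclideanSpace.norm_eq y
  have h1 : |y i| ^ 2 ≤ ∑ j, |y j| ^ 2 := by
    apply Finset.single_le_sum (f := fun j => |y j| ^ 2) (fun j _ => by positivity)
      (Finset.mem_univ i)
  have h2 : ‖y‖ ^ 2 = ∑ j, |y j| ^ 2 := by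
    rw [this, Real.sq_sqrt (by positivity)]
    simp [Real.norm_eq_abs]
  have h3 : |y i| ^ 2 ≤ ‖y‖ ^ 2 := by rw [h2]; exact h1
  exact abs_le_of_sq_le_sq' h3 (norm_nonneg y) |>.2

lemma slab_volume {n : ℕ} (hn : 0 < n) (θ : Euc n) (hθ : ‖θ‖ = 1) (R a b : ℝ) :
    volume {x : Euc n | ‖x‖ ≤ R ∧ a ≤ ⟪x, θ⟫ ∧ ⟪x, θ⟫ ≤ b} ≤
      ENNReal.ofReal (b - a) * ENNReal.ofReal (2 * R) ^ (n - 1) := by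
  set i₀ : Fin n := ⟨0, hn⟩ with hi₀
  have horth : Orthonormal ℝ (({i₀} : Set (Fin n)).restrict (fun _ : Fin n => θ)) := by
    constructor
    · intro i
      exact hθ
    · intro i j hij
      exact absurd (Subtype.ext (i.2.trans j.2.symm)) hij
  obtain ⟨bb, hbb⟩ := Orthonormal.exists_orthonormalBasis_extension_of_card_eq
    (𝕜 := ℝ) (by simp) horth
  have hbθ : bb i₀ = θ := hbb i₀ rfl
  have key : ∀ x : Euc n, ⟪x, θ⟫ = bb.repr x i₀ := by
    intro x
    rw [bb.repr_apply_apply, hbθ, real_inner_comm]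
  set T : Set (Fin n → ℝ) := Set.univ.pi (fun j => if j = i₀ then Icc a b else Icc (-R) R)
    with hT
  have hTm : MeasurableSet T := MeasurableSet.univ_pi (fun j => by
    split <;> exact measurableSet_Icc)
  have hmp : MeasurePreserving
      (fun x : Euc n => (MeasurableEquiv.toLp 2 (Fin n → ℝ)).symm (bb.repr x)) volume volume :=
    (EuclideanSpace.volume_preserving_symm_measurableEquiv_toLp (Fin n)).comp
      (bb.repr.measurePreserving)
  have hsub : {x : Euc n | ‖x‖ ≤ R ∧ a ≤ ⟪x, θ⟫ ∧ ⟪x, θ⟫ ≤ b} ⊆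
      (fun x : Euc n => (MeasurableEquiv.toLp 2 (Fin n → ℝ)).symm (bb.repr x)) ⁻¹' T := by
    intro x hx
    obtain ⟨hxR, hxa, hxb⟩ := hx
    intro j _
    show (MeasurableEquiv.toLp 2 (Fin n → ℝ)).symm (bb.repr x) j
        ∈ (if j = i₀ then Icc a b else Icc (-R) R)
    have hcoord : (MeasurableEquiv.toLp 2 (Fin n → ℝ)).symm (bb.repr x) j = bb.repr x j := rfl
    rw [hcoord]
    by_cases hj : j = i₀
    · subst hj
      simp only [if_pos rfl]
      exact ⟨by rw [← key x]; exact hxa, by rw [← key x]; exact hxb⟩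
    · simp only [if_neg hj]
      have h1 : |bb.repr x j| ≤ ‖bb.repr x‖ := coord_abs_le_norm _ j
      have h2 : ‖bb.repr x‖ = ‖x‖ := bb.repr.norm_map x
      rw [h2] at h1
      have := abs_le.mp (le_trans h1 hxR)
      exact this
  calc volume {x : Euc n | ‖x‖ ≤ R ∧ a ≤ ⟪x, θ⟫ ∧ ⟪x, θ⟫ ≤ b}
      ≤ volume ((fun x : Euc n => (MeasurableEquiv.toLp 2 (Fin n → ℝ)).symm (bb.repr x)) ⁻¹' T) :=
        measure_mono hsub
    _ = volume T := hmp.measure_preimage hTm.nullMeasurableSet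
    _ = ∏ j, volume (if j = i₀ then Icc a b else Icc (-R) R) := by
        rw [hT, volume_pi_pi]
    _ = ENNReal.ofReal (b - a) * ENNReal.ofReal (2 * R) ^ (n - 1) := by
        rw [← Finset.mul_prod_erase Finset.univ _ (Finset.mem_univ i₀)]
        congr 1
        · rw [if_pos rfl, Real.volume_Icc]
        · rw [Finset.prod_congr rfl (fun j hj => ?_), Finset.prod_const,
            Finset.card_erase_of_mem (Finset.mem_univ i₀), Finset.card_univ, Fintype.card_fin]
          rw [if_neg (Finset.mem_erase.mp hj).1, Real.volume_Icc]
          congr 1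
          ring

section PolarLemmas
variable {n : ℕ}

lemma polarSet_anti {C D : Set (Euc n)} (h : C ⊆ D) : polarSet D ⊆ polarSet C :=
  fun y hy x hx => hy x (h hx)

lemma isClosed_polarSet (C : Set (Euc n)) : IsClosed (polarSet C) := by
  have : polarSet C = ⋂ x ∈ C, {y : Euc n | ⟪x, y⟫ ≤ 1} := by
    ext y; simp [polarSet, Set.mem_iInter]
  rw [this]
  exact isClosed_biInter fun x _ =>
    isClosed_le (Continuous.inner continuous_const continuous_id) continuous_const

lemma polarSet_smul {C : Set (Euc n)} {c : ℝ} (hc : 0 < c) :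
    polarSet (c • C) = c⁻¹ • polarSet C := by
  ext y
  constructor
  · intro hy
    rw [Set.mem_smul_set_iff_inv_smul_mem₀ (inv_ne_zero (ne_of_gt hc)), inv_inv]
    intro x hx
    have h1 := hy (c • x) (Set.smul_mem_smul_set hx)
    rw [real_inner_smul_left] at h1
    rwa [real_inner_smul_right]
  · intro hy x' hx'
    obtain ⟨x, hx, rfl⟩ := hx'
    rw [Set.mem_smul_set_iff_inv_smul_mem₀ (inv_ne_zero (ne_of_gt hc)), inv_inv] at hy
    have h1 := hy x hx
    rw [real_inner_smul_right] at h1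
    rwa [real_inner_smul_left]

lemma polarSet_subset_closedBall {C : Set (Euc n)} {r : ℝ} (hr : 0 < r)
    (h : closedBall 0 r ⊆ C) : polarSet C ⊆ closedBall 0 r⁻¹ := by
  intro y hy
  rcases eq_or_ne y 0 with rfl | hy0
  · simp [mem_closedBall, dist_self]
    positivity
  · have hyn : 0 < ‖y‖ := norm_pos_iff.mpr hy0
    have hx : (r / ‖y‖) • y ∈ C := by
      apply h
      rw [mem_closedBall, dist_zero_right, norm_smul, Real.norm_eq_abs,
        abs_of_pos (by positivity)]
      rw [div_mul_cancel₀ _ (ne_of_gt hyn)]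
    have h1 := hy _ hx
    rw [real_inner_smul_left, real_inner_self_eq_norm_sq] at h1
    rw [mem_closedBall, dist_zero_right]
    rw [div_mul_eq_mul_div] at h1
    have h2 : r * ‖y‖ ≤ 1 := by
      have h3 : r * ‖y‖ ^ 2 / ‖y‖ = r * ‖y‖ := by
        field_simp
      linarith [h3 ▸ h1]
    calc ‖y‖ = r⁻¹ * (r * ‖y‖) := by field_simp
      _ ≤ r⁻¹ * 1 := mul_le_mul_of_nonneg_left h2 (by positivity)
      _ = r⁻¹ := mul_one _

lemma closedBall_subset_polarSet {C : Set (Euc n)} {R : ℝ} (hR : 0 < R)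
    (h : C ⊆ closedBall 0 R) : closedBall 0 R⁻¹ ⊆ polarSet C := by
  intro y hy x hx
  have h1 : ‖x‖ ≤ R := by
    have := h hx
    rwa [mem_closedBall, dist_zero_right] at this
  have h2 : ‖y‖ ≤ R⁻¹ := by rwa [mem_closedBall, dist_zero_right] at hy
  calc ⟪x, y⟫ ≤ ‖x‖ * ‖y‖ := real_inner_le_norm x y
    _ ≤ R * R⁻¹ := by
        apply mul_le_mul h1 h2 (norm_nonneg y) hR.le
    _ = 1 := mul_inv_cancel₀ (ne_of_gt hR)

end PolarLemmas

section SuppLemmas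
variable {n : ℕ} {K : Set (Euc n)}

lemma suppFn_mem_le (hcomp : IsCompact K) (θ : Euc n) {x : Euc n} (hx : x ∈ K) :
    ⟪x, θ⟫ ≤ suppFn K θ :=
  le_csSup (hcomp.image (Continuous.inner continuous_id continuous_const)).bddAbove
    ⟨x, hx, rfl⟩

lemma suppFn_le (hne : K.Nonempty) (θ : Euc n) {c : ℝ} (h : ∀ x ∈ K, ⟪x, θ⟫ ≤ c) :
    suppFn K θ ≤ c :=
  csSup_le (hne.image _) (by rintro _ ⟨x, hx, rfl⟩; exact h x hx)

lemma suppFn_nonneg (hcomp : IsCompact K) (hK0 : (0 : Euc n) ∈ K) (θ : Euc n) :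
    0 ≤ suppFn K θ := by
  have := suppFn_mem_le hcomp θ hK0
  simpa using this

lemma mem_body_of_suppFn_le (hconv : Convex ℝ K) (hcomp : IsCompact K)
    (hne : K.Nonempty) {y : Euc n} (h : ∀ v, ⟪y, v⟫ ≤ suppFn K v) : y ∈ K := by
  by_contra hy
  obtain ⟨f, u, hfu, hfy⟩ := geometric_hahn_banach_closed_point hconv hcomp.isClosed hy
  set v := (InnerProductSpace.toDual ℝ (Euc n)).symm f with hv
  have hvz : ∀ z : Euc n, ⟪z, v⟫ = f z := by
    intro z
    rw [real_inner_comm]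
    exact InnerProductSpace.toDual_symm_apply
  have h1 : suppFn K v ≤ u :=
    suppFn_le hne v (fun x hx => (hvz x) ▸ (hfu x hx).le)
  have h2 : u < ⟪y, v⟫ := by rw [hvz]; exact hfy
  linarith [h v]

lemma mem_smul_body (hconv : Convex ℝ K) (hcomp : IsCompact K) (hne : K.Nonempty)
    {β : ℝ} (hβ : 0 < β) {y : Euc n} (h : ∀ v, ⟪y, v⟫ ≤ β * suppFn K v) : y ∈ β • K := by
  rw [Set.mem_smul_set_iff_inv_smul_mem₀ (ne_of_gt hβ)]
  apply mem_body_of_suppFn_le hconv hcomp hne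
  intro v
  rw [real_inner_smul_left]
  calc β⁻¹ * ⟪y, v⟫ ≤ β⁻¹ * (β * suppFn K v) :=
        mul_le_mul_of_nonneg_left (h v) (by positivity)
    _ = suppFn K v := by field_simp

end SuppLemmas

section IntegralBounds
variable {n : ℕ} {K : Set (Euc n)}

lemma integrable_rpow_inner (hcomp : IsCompact K) {p : ℝ} (hp0 : 0 ≤ p) (v : Euc n) :
    IntegrableOn (fun x : Euc n => |⟪x, v⟫| ^ p) K := by
  apply ContinuousOn.integrableOn_compact hcomp
  apply Continuous.continuousOn
  exact ((Continuous.inner continuous_id continuous_const).abs).rpow_const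
    (fun x => Or.inr hp0)

lemma abs_inner_le_suppFn (hcomp : IsCompact K) (hsymm : ∀ x ∈ K, -x ∈ K)
    (θ : Euc n) {x : Euc n} (hx : x ∈ K) : |⟪x, θ⟫| ≤ suppFn K θ := by
  rw [abs_le]
  constructor
  · have := suppFn_mem_le hcomp θ (hsymm x hx)
    rw [inner_neg_left] at this
    linarith
  · exact suppFn_mem_le hcomp θ hx

lemma integral_upper (hn : 0 < n) (hcomp : IsCompact K)
    (hK0 : (0 : Euc n) ∈ K) (hsymm : ∀ x ∈ K, -x ∈ K) (hvol : volume K = 1)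
    {R : ℝ} (hR : 1 ≤ R) (hKR : K ⊆ closedBall 0 R)
    {p t : ℝ} (hp : 1 ≤ p) (ht0 : 0 < t) (ht1 : t < 1/2)
    (θ : Euc n) (hθ : ‖θ‖ = 1) :
    ∫ x in K, |⟪x, θ⟫| ^ p ≤
      (suppFn K θ) ^ p * ((1 - t) ^ p + (2^n * R^n) * t) := by
  have hp0 : (0:ℝ) ≤ p := by linarith
  set m := suppFn K θ with hm
  have hm0 : 0 ≤ m := suppFn_nonneg hcomp hK0 θ
  have hmR : m ≤ R := by
    apply suppFn_le ⟨0, hK0⟩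
    intro x hx
    calc ⟪x, θ⟫ ≤ ‖x‖ * ‖θ‖ := real_inner_le_norm x θ
      _ ≤ R := by
          rw [hθ, mul_one]
          have := hKR hx
          rwa [mem_closedBall, dist_zero_right] at this
  have habs : ∀ x ∈ K, |⟪x, θ⟫| ≤ m := fun x hx => abs_inner_le_suppFn hcomp hsymm θ hx
  have hint : IntegrableOn (fun x : Euc n => |⟪x, θ⟫| ^ p) K := integrable_rpow_inner hcomp hp0 θ
  set S : Set (Euc n) := {x | |⟪x, θ⟫| ≤ m * (1 - t)} with hS
  have hSm : MeasurableSet S :=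
    (isClosed_le ((Continuous.inner continuous_id continuous_const).abs) continuous_const).measurableSet
  have hKm : MeasurableSet K := hcomp.isClosed.measurableSet
  have hsplit : K = (K ∩ S) ∪ (K \ S) := (Set.inter_union_diff K S).symm
  have hdisj : Disjoint (K ∩ S) (K \ S) :=
    Set.disjoint_sdiff_right.mono_left Set.inter_subset_right
  have hvolK1 : volume (K ∩ S) ≤ 1 := hvol ▸ measure_mono Set.inter_subset_left
  have hvolK2fin : volume (K \ S) < ⊤ :=
    lt_of_le_of_lt (hvol ▸ measure_mono Set.diff_subset) (by norm_num)
  -- bound on volume of K \ S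
  have hvolK2 : (volume (K \ S)).toReal ≤ (2^n * R^n) * t := by
    have hsub2 : K \ S ⊆
        {x : Euc n | ‖x‖ ≤ R ∧ m * (1-t) ≤ ⟪x, θ⟫ ∧ ⟪x, θ⟫ ≤ m} ∪
        {x : Euc n | ‖x‖ ≤ R ∧ -m ≤ ⟪x, θ⟫ ∧ ⟪x, θ⟫ ≤ -(m * (1-t))} := by
      intro x hx
      obtain ⟨hxK, hxS⟩ := hx
      have hxR : ‖x‖ ≤ R := by
        have := hKR hxK
        rwa [mem_closedBall, dist_zero_right] at this
      have hxm := habs x hxK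
      rw [hS, Set.mem_setOf_eq, not_le] at hxS
      rcases le_or_gt 0 ⟪x, θ⟫ with hsgn | hsgn
      · left
        refine ⟨hxR, ?_, ?_⟩
        · rw [abs_of_nonneg hsgn] at hxS
          exact hxS.le
        · exact (abs_le.mp hxm).2
      · right
        refine ⟨hxR, ?_, ?_⟩
        · exact (abs_le.mp hxm).1
        · rw [abs_of_neg hsgn] at hxS
          linarith
    have hb1 := slab_volume hn θ hθ R (m * (1-t)) m
    have hb2 := slab_volume hn θ hθ R (-m) (-(m * (1-t)))
    have hsum := (measure_mono hsub2).trans (measure_union_le (μ := volume) _ _)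
    have heq1 : m - m * (1-t) = m * t := by ring
    have heq2 : -(m * (1-t)) - -m = m * t := by ring
    rw [heq1] at hb1
    rw [heq2] at hb2
    have htot : volume (K \ S) ≤
        ENNReal.ofReal (m * t) * ENNReal.ofReal (2 * R) ^ (n-1) +
        ENNReal.ofReal (m * t) * ENNReal.ofReal (2 * R) ^ (n-1) :=
      hsum.trans (add_le_add hb1 hb2)
    have hreal : ENNReal.ofReal (m * t) * ENNReal.ofReal (2 * R) ^ (n-1) +
        ENNReal.ofReal (m * t) * ENNReal.ofReal (2 * R) ^ (n-1)
        ≤ ENNReal.ofReal ((2^n * R^n) * t) := by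
      rw [← ENNReal.ofReal_pow (by linarith), ← ENNReal.ofReal_mul (by positivity),
        ← ENNReal.ofReal_add (by positivity) (by positivity)]
      apply ENNReal.ofReal_le_ofReal
      have hkey : m * t * (2*R)^(n-1) + m * t * (2*R)^(n-1) = 2 * (2*R)^(n-1) * (m * t) := by
        ring
      rw [hkey]
      have h2R : 2 * (2*R)^(n-1) * (m*t) ≤ 2 * (2*R)^(n-1) * (R*t) := by
        apply mul_le_mul_of_nonneg_left _ (by positivity)
        exact mul_le_mul_of_nonneg_right hmR ht0.le
      have hpow : 2 * (2*R)^(n-1) * (R*t) = 2^n * R^n * t := by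
        have h' : (2:ℝ)^n * R^n = (2*R)^(n-1) * (2*R) := by
          rw [← mul_pow, ← pow_succ, Nat.sub_add_cancel hn]
        rw [h']
        ring
      linarith
    exact ENNReal.toReal_le_of_le_ofReal (by positivity) (htot.trans hreal)
  -- split the integral
  have hIsplit : ∫ x in K, |⟪x, θ⟫| ^ p =
      (∫ x in K ∩ S, |⟪x, θ⟫| ^ p) + ∫ x in K \ S, |⟪x, θ⟫| ^ p := by
    conv_lhs => rw [hsplit]
    exact setIntegral_union hdisj (hKm.diff hSm)
      (hint.mono_set Set.inter_subset_left) (hint.mono_set Set.diff_subset)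
  have hI1 : (∫ x in K ∩ S, |⟪x, θ⟫| ^ p) ≤ (m * (1-t)) ^ p := by
    have hb := norm_setIntegral_le_of_norm_le_const (C := (m * (1-t))^p)
      (lt_of_le_of_lt hvolK1 (by norm_num))
      (fun x hx => by
        rw [Real.norm_eq_abs, abs_of_nonneg (Real.rpow_nonneg (abs_nonneg _) p)]
        exact Real.rpow_le_rpow (abs_nonneg _) hx.2 hp0)
    have h1 : (∫ x in K ∩ S, |⟪x, θ⟫| ^ p) ≤ ‖∫ x in K ∩ S, |⟪x, θ⟫| ^ p‖ :=
      le_abs_self _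
    have h2 : (m * (1-t))^p * (volume (K ∩ S)).toReal ≤ (m * (1-t))^p * 1 := by
      apply mul_le_mul_of_nonneg_left _ (Real.rpow_nonneg (mul_nonneg hm0 (by linarith)) p)
      exact ENNReal.toReal_le_of_le_ofReal one_pos.le (by simpa using hvolK1)
    calc (∫ x in K ∩ S, |⟪x, θ⟫| ^ p) ≤ ‖∫ x in K ∩ S, |⟪x, θ⟫| ^ p‖ := h1
      _ ≤ (m * (1-t))^p * (volume (K ∩ S)).toReal := hb
      _ ≤ (m * (1-t))^p * 1 := h2
      _ = (m * (1-t))^p := mul_one _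
  have hI2 : (∫ x in K \ S, |⟪x, θ⟫| ^ p) ≤ m ^ p * ((2^n * R^n) * t) := by
    have hb := norm_setIntegral_le_of_norm_le_const (C := m^p) hvolK2fin
      (fun x hx => by
        rw [Real.norm_eq_abs, abs_of_nonneg (Real.rpow_nonneg (abs_nonneg _) p)]
        exact Real.rpow_le_rpow (abs_nonneg _) (habs x hx.1) hp0)
    have h1 : (∫ x in K \ S, |⟪x, θ⟫| ^ p) ≤ ‖∫ x in K \ S, |⟪x, θ⟫| ^ p‖ := le_abs_self _
    calc (∫ x in K \ S, |⟪x, θ⟫| ^ p) ≤ ‖∫ x in K \ S, |⟪x, θ⟫| ^ p‖ := h1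
      _ ≤ m^p * (volume (K \ S)).toReal := hb
      _ ≤ m^p * ((2^n * R^n) * t) :=
          mul_le_mul_of_nonneg_left hvolK2 (Real.rpow_nonneg hm0 p)
  have hmul : (m * (1-t)) ^ p = m ^ p * (1-t) ^ p := Real.mul_rpow hm0 (by linarith)
  rw [hIsplit]
  calc (∫ x in K ∩ S, |⟪x, θ⟫| ^ p) + ∫ x in K \ S, |⟪x, θ⟫| ^ p
      ≤ (m * (1-t)) ^ p + m ^ p * ((2^n * R^n) * t) := add_le_add hI1 hI2
    _ = m ^ p * ((1 - t) ^ p + (2^n * R^n) * t) := by rw [hmul]; ring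

end IntegralBounds

section LowerBound
variable {n : ℕ} {K : Set (Euc n)}

lemma integral_lower (hconv : Convex ℝ K) (hcomp : IsCompact K)
    (hK0 : (0 : Euc n) ∈ K) (hsymm : ∀ x ∈ K, -x ∈ K) (hvol : volume K = 1)
    {p s : ℝ} (hp : 1 ≤ p) (hs0 : 0 < s) (hs1 : s ≤ 1/2)
    (θ : Euc n) (hθ : ‖θ‖ = 1) :
    (suppFn K θ) ^ p * ((1 - 2*s) ^ p * s ^ n) ≤ ∫ x in K, |⟪x, θ⟫| ^ p := by
  have hp0 : (0:ℝ) ≤ p := by linarith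
  set m := suppFn K θ with hm
  have hm0 : 0 ≤ m := suppFn_nonneg hcomp hK0 θ
  have hcont : Continuous (fun x : Euc n => ⟪x, θ⟫) :=
    Continuous.inner continuous_id continuous_const
  obtain ⟨x₀, hx₀K, hx₀max⟩ := hcomp.exists_isMaxOn ⟨0, hK0⟩ hcont.continuousOn
  have hx₀m : ⟪x₀, θ⟫ = m := by
    apply le_antisymm (suppFn_mem_le hcomp θ hx₀K)
    exact suppFn_le ⟨0, hK0⟩ θ (fun x hx => hx₀max hx)
  have hint : IntegrableOn (fun x : Euc n => |⟪x, θ⟫| ^ p) K := integrable_rpow_inner hcomp hp0 θ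
  set Ks := ⇑(AffineMap.homothety x₀ s) '' K with hKs
  have hhom : ∀ y : Euc n, (AffineMap.homothety x₀ s) y = s • (y - x₀) + x₀ := by
    intro y
    rw [AffineMap.homothety_apply]
    simp [vsub_eq_sub, vadd_eq_add]
  have hsub : Ks ⊆ K := by
    rintro _ ⟨y, hy, rfl⟩
    rw [hhom y]
    have hcombo := hconv hy hx₀K hs0.le (by linarith : (0:ℝ) ≤ 1 - s) (by ring)
    convert hcombo using 1
    rw [smul_sub, sub_smul, one_smul]
    abel
  have hKsc : IsCompact Ks := hcomp.image (by
    have : Continuous (fun y : Euc n => s • (y - x₀) + x₀) :=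
      (((continuous_id.sub continuous_const).const_smul s).add continuous_const)
    apply this.congr
    intro y
    rw [hhom y])
  have hKsm : MeasurableSet Ks := hKsc.isClosed.measurableSet
  have hvolKs : volume Ks = ENNReal.ofReal (s ^ n) := by
    rw [hKs, MeasureTheory.Measure.addHaar_image_homothety, hvol, mul_one,
      finrank_euclideanSpace_fin, abs_of_nonneg (by positivity)]
  have hlow : ∀ y ∈ Ks, (1 - 2*s) * m ≤ ⟪y, θ⟫ := by
    rintro _ ⟨y, hy, rfl⟩
    rw [hhom y, inner_add_left, real_inner_smul_left, inner_sub_left, hx₀m]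
    have h1 : -m ≤ ⟪y, θ⟫ := by
      have := suppFn_mem_le hcomp θ (hsymm y hy)
      rw [inner_neg_left] at this
      linarith
    have h2 : s * (-m - m) ≤ s * (⟪y, θ⟫ - m) :=
      mul_le_mul_of_nonneg_left (by linarith) hs0.le
    nlinarith
  have hc0 : 0 ≤ (1 - 2*s) * m := mul_nonneg (by linarith) hm0
  have h1 : ((1 - 2*s) * m) ^ p * (volume Ks).toReal ≤ ∫ x in Ks, |⟪x, θ⟫| ^ p := by
    apply setIntegral_ge_of_const_le_real hKsm
    · rw [hvolKs]; exact ENNReal.ofReal_ne_top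
    · intro x hx
      calc ((1 - 2*s) * m) ^ p ≤ ⟪x, θ⟫ ^ p := by
            apply Real.rpow_le_rpow hc0 _ hp0
            · exact hlow x hx
        _ ≤ |⟪x, θ⟫| ^ p := by
            apply Real.rpow_le_rpow _ (le_abs_self _) hp0
            linarith [hlow x hx]
    · exact hint.mono_set hsub
  have h2 : (∫ x in Ks, |⟪x, θ⟫| ^ p) ≤ ∫ x in K, |⟪x, θ⟫| ^ p := by
    apply setIntegral_mono_set hint
    · exact Filter.Eventually.of_forall (fun x => Real.rpow_nonneg (abs_nonneg _) p)
    · exact hsub.eventuallyLE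
  rw [hvolKs, ENNReal.toReal_ofReal (by positivity)] at h1
  have hmul : ((1 - 2*s) * m) ^ p = (1 - 2*s) ^ p * m ^ p := Real.mul_rpow (by linarith) hm0
  rw [hmul] at h1
  calc m ^ p * ((1 - 2*s) ^ p * s ^ n) = (1 - 2*s) ^ p * m ^ p * s ^ n := by ring
    _ ≤ ∫ x in Ks, |⟪x, θ⟫| ^ p := h1
    _ ≤ ∫ x in K, |⟪x, θ⟫| ^ p := h2

end LowerBound

section Inclusions
variable {n : ℕ} {K : Set (Euc n)}

lemma suppFn_zero (hne : K.Nonempty) : suppFn K (0 : Euc n) = 0 := by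
  rw [suppFn]
  have : (fun x : Euc n => ⟪x, (0:Euc n)⟫) '' K = {0} := by
    rw [show (fun x : Euc n => ⟪x, (0:Euc n)⟫) = fun _ => (0:ℝ) from
      funext (fun x => inner_zero_right x)]
    exact hne.image_const 0
  rw [this, csSup_singleton]

lemma integral_rpow_zero_vec {p : ℝ} (hp : 1 ≤ p) :
    (∫ x in K, |⟪x, (0 : Euc n)⟫| ^ p) = 0 := by
  have : (fun x : Euc n => |⟪x, (0:Euc n)⟫| ^ p) = fun _ => (0:ℝ) := by
    funext x
    rw [inner_zero_right, abs_zero, Real.zero_rpow (by linarith : p ≠ 0)]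
  rw [this]
  simp

lemma key_scaling (hcomp : IsCompact K) (hK0 : (0:Euc n) ∈ K) {v : Euc n} (hv : v ≠ 0)
    {p : ℝ} (hp : 1 ≤ p) :
    (∫ x in K, |⟪x, v⟫| ^ p) ^ (1/p)
      = ‖v‖ * (∫ x in K, |⟪x, ‖v‖⁻¹ • v⟫| ^ p) ^ (1/p) ∧
    suppFn K v = ‖v‖ * suppFn K (‖v‖⁻¹ • v) := by
  set θ : Euc n := ‖v‖⁻¹ • v with hθdef
  have hnv : 0 < ‖v‖ := norm_pos_iff.mpr hv
  have hvθ : v = ‖v‖ • θ := by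
    rw [hθdef, smul_smul, mul_inv_cancel₀ (ne_of_gt hnv), one_smul]
  have key1 : ∀ x : Euc n, ⟪x, v⟫ = ‖v‖ * ⟪x, θ⟫ := by
    intro x
    conv_lhs => rw [hvθ]
    exact real_inner_smul_right x θ ‖v‖
  have hp0 : (0:ℝ) < p := by linarith
  constructor
  · have hieq : (∫ x in K, |⟪x, v⟫| ^ p) = ‖v‖ ^ p * ∫ x in K, |⟪x, θ⟫| ^ p := by
      rw [← MeasureTheory.integral_const_mul]
      apply setIntegral_congr_fun hcomp.isClosed.measurableSet
      intro x _
      show |⟪x, v⟫| ^ p = ‖v‖ ^ p * |⟪x, θ⟫| ^ p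
      rw [key1 x, abs_mul, abs_of_nonneg hnv.le,
        Real.mul_rpow hnv.le (abs_nonneg _)]
    rw [hieq, Real.mul_rpow (Real.rpow_nonneg hnv.le p)
      (integral_nonneg (fun x => Real.rpow_nonneg (abs_nonneg _) p)),
      ← Real.rpow_mul hnv.le, mul_one_div_cancel (ne_of_gt hp0), Real.rpow_one]
  · apply le_antisymm
    · apply suppFn_le ⟨0, hK0⟩
      intro x hx
      rw [key1 x]
      exact mul_le_mul_of_nonneg_left (suppFn_mem_le hcomp θ hx) hnv.le
    · have h2 : suppFn K θ ≤ ‖v‖⁻¹ * suppFn K v := by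
        apply suppFn_le ⟨0, hK0⟩
        intro x hx
        have : ⟪x, θ⟫ = ‖v‖⁻¹ * ⟪x, v⟫ := by
          rw [key1 x]
          field_simp
        rw [this]
        exact mul_le_mul_of_nonneg_left (suppFn_mem_le hcomp v hx) (by positivity)
      calc ‖v‖ * suppFn K θ ≤ ‖v‖ * (‖v‖⁻¹ * suppFn K v) :=
            mul_le_mul_of_nonneg_left h2 hnv.le
        _ = suppFn K v := by field_simp

lemma bound_all_upper (hcomp : IsCompact K) (hK0 : (0:Euc n) ∈ K) {p β : ℝ}
    (hp : 1 ≤ p) (hβ : 0 ≤ β)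
    (hunit : ∀ θ : Euc n, ‖θ‖ = 1 → (∫ x in K, |⟪x, θ⟫| ^ p) ^ (1/p) ≤ β * suppFn K θ) :
    ∀ v : Euc n, (∫ x in K, |⟪x, v⟫| ^ p) ^ (1/p) ≤ β * suppFn K v := by
  intro v
  rcases eq_or_ne v 0 with rfl | hv
  · rw [integral_rpow_zero_vec hp, suppFn_zero ⟨0, hK0⟩,
      Real.zero_rpow (by positivity : 1/p ≠ 0), mul_zero]
  · obtain ⟨hI, hS⟩ := key_scaling hcomp hK0 hv hp
    have hθ : ‖‖v‖⁻¹ • v‖ = 1 := norm_smul_inv_norm hv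
    rw [hI, hS]
    calc ‖v‖ * (∫ x in K, |⟪x, ‖v‖⁻¹ • v⟫| ^ p) ^ (1/p)
        ≤ ‖v‖ * (β * suppFn K (‖v‖⁻¹ • v)) :=
          mul_le_mul_of_nonneg_left (hunit _ hθ) (norm_nonneg v)
      _ = β * (‖v‖ * suppFn K (‖v‖⁻¹ • v)) := by ring

lemma bound_all_lower (hcomp : IsCompact K) (hK0 : (0:Euc n) ∈ K) {p α : ℝ}
    (hp : 1 ≤ p) (hα : 0 ≤ α)
    (hunit : ∀ θ : Euc n, ‖θ‖ = 1 → α * suppFn K θ ≤ (∫ x in K, |⟪x, θ⟫| ^ p) ^ (1/p)) :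
    ∀ v : Euc n, α * suppFn K v ≤ (∫ x in K, |⟪x, v⟫| ^ p) ^ (1/p) := by
  intro v
  rcases eq_or_ne v 0 with rfl | hv
  · rw [integral_rpow_zero_vec hp, suppFn_zero ⟨0, hK0⟩,
      Real.zero_rpow (by positivity : 1/p ≠ 0), mul_zero]
  · obtain ⟨hI, hS⟩ := key_scaling hcomp hK0 hv hp
    have hθ : ‖‖v‖⁻¹ • v‖ = 1 := norm_smul_inv_norm hv
    rw [hI, hS]
    calc α * (‖v‖ * suppFn K (‖v‖⁻¹ • v)) = ‖v‖ * (α * suppFn K (‖v‖⁻¹ • v)) := by ring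
      _ ≤ ‖v‖ * (∫ x in K, |⟪x, ‖v‖⁻¹ • v⟫| ^ p) ^ (1/p) :=
          mul_le_mul_of_nonneg_left (hunit _ hθ) (norm_nonneg v)

lemma ZpBody_subset_smul (hconv : Convex ℝ K) (hcomp : IsCompact K) (hK0 : (0:Euc n) ∈ K)
    {p β : ℝ} (hβ : 0 < β)
    (hall : ∀ v : Euc n, (∫ x in K, |⟪x, v⟫| ^ p) ^ (1/p) ≤ β * suppFn K v) :
    {y : Euc n | ∀ v : Euc n, ⟪y, v⟫ ≤ (∫ x in K, |⟪x, v⟫| ^ p) ^ (1/p)} ⊆ β • K :=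
  fun y hy => mem_smul_body hconv hcomp ⟨0, hK0⟩ hβ (fun v => le_trans (hy v) (hall v))

lemma smul_subset_ZpBody (hcomp : IsCompact K) {p α : ℝ} (hα : 0 ≤ α)
    (hall : ∀ v : Euc n, α * suppFn K v ≤ (∫ x in K, |⟪x, v⟫| ^ p) ^ (1/p)) :
    α • K ⊆ {y : Euc n | ∀ v : Euc n, ⟪y, v⟫ ≤ (∫ x in K, |⟪x, v⟫| ^ p) ^ (1/p)} := by
  rintro _ ⟨x, hx, rfl⟩ v
  calc ⟪α • x, v⟫ = α * ⟪x, v⟫ := real_inner_smul_left x v α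
    _ ≤ α * suppFn K v := mul_le_mul_of_nonneg_left (suppFn_mem_le hcomp v hx) hα
    _ ≤ (∫ x in K, |⟪x, v⟫| ^ p) ^ (1/p) := hall v

end Inclusions

lemma volume_smul_set {n : ℕ} (S : Set (Euc n)) {c : ℝ} (hc : 0 ≤ c) :
    volume (c • S) = ENNReal.ofReal (c ^ n) * volume S := by
  rw [MeasureTheory.Measure.addHaar_smul volume c S, finrank_euclideanSpace_fin,
    abs_of_nonneg (pow_nonneg hc n)]

theorem stmt3 {n : ℕ} (K : Set (Euc n))
    (hconv : Convex ℝ K) (hcomp : IsCompact K)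
    (hsymm : ∀ x ∈ K, -x ∈ K) (hvol : volume K = 1) :
    (n : ℝ) * (volume (polarSet K)).toReal ≤
        Filter.liminf
          (fun p : ℝ => (p / Real.log p) *
            ((volume (polarSet (ZpBody K p))).toReal - (volume (polarSet K)).toReal)) atTop ∧
      Filter.limsup
          (fun p : ℝ => (p / Real.log p) *
            ((volume (polarSet (ZpBody K p))).toReal - (volume (polarSet K)).toReal)) atTop ≤
        (n : ℝ) ^ 2 * (volume (polarSet K)).toReal := by
  rcases Nat.eq_zero_or_pos n with hn0 | hn
  · subst hn0
    have hpolar : ∀ C : Set (Euc 0), polarSet C = Set.univ := by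
      intro C
      ext y
      simp only [polarSet, Set.mem_setOf_eq, Set.mem_univ, iff_true]
      intro x _
      rw [PiLp.inner_apply]
      simp
    have hfun : ∀ p : ℝ, (p / Real.log p) *
        ((volume (polarSet (ZpBody K p))).toReal - (volume (polarSet K)).toReal) = 0 := by
      intro p
      rw [hpolar, hpolar]
      ring
    constructor
    · simp only [hfun]
      rw [liminf_const]
      simp
    · simp only [hfun]
      rw [limsup_const]
      simp
  · have hne : K.Nonempty := by
      rcases Set.eq_empty_or_nonempty K with h | h
      · rw [h] at hvol
        simp at hvol
      · exact h
    obtain ⟨z, hz⟩ := hne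
    have hK0 : (0 : Euc n) ∈ K := by
      have h2 := hconv hz (hsymm z hz) (by norm_num : (0:ℝ) ≤ 1/2)
        (by norm_num : (0:ℝ) ≤ 1/2) (by norm_num)
      have h3 : (1/2 : ℝ) • z + (1/2 : ℝ) • (-z) = 0 := by rw [smul_neg]; abel
      rwa [h3] at h2
    have hint_ne : (interior K).Nonempty := by
      rw [hconv.interior_nonempty_iff_affineSpan_eq_top]
      by_contra htop
      have h0 := MeasureTheory.Measure.addHaar_affineSubspace volume (affineSpan ℝ K) htop
      have hsub := measure_mono (μ := volume) (subset_affineSpan ℝ K)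
      rw [hvol, h0] at hsub
      simp at hsub
    obtain ⟨y0, hy0⟩ := hint_ne
    have h0int : (0 : Euc n) ∈ interior K := by
      have h2 := hconv.combo_interior_self_mem_interior hy0
        (hsymm y0 (interior_subset hy0)) (by norm_num : (0:ℝ) < 1/2)
        (by norm_num : (0:ℝ) ≤ 1/2) (by norm_num)
      have h3 : (1/2 : ℝ) • y0 + (1/2 : ℝ) • (-y0) = 0 := by rw [smul_neg]; abel
      rwa [h3] at h2
    obtain ⟨ε, hε0, hball⟩ := Metric.mem_nhds_iff.mp (mem_interior_iff_mem_nhds.mp h0int)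
    have hrK : closedBall (0 : Euc n) (ε/2) ⊆ K :=
      (closedBall_subset_ball (by linarith)).trans hball
    have hr0 : (0:ℝ) < ε/2 := by linarith
    obtain ⟨R, hR1, hKR⟩ := hcomp.isBounded.subset_closedBall_lt 1 0
    have hR0 : (0:ℝ) < R := by linarith
    set A : ℝ := 2^n * R^n with hA
    have hA1 : (1:ℝ) ≤ A := by
      have h1 : (1:ℝ) ≤ 2^n := one_le_pow₀ (by norm_num)
      have h2 : (1:ℝ) ≤ R^n := one_le_pow₀ (by linarith)
      nlinarith
    set V : ℝ := (volume (polarSet K)).toReal with hV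
    have hpolarK_lb : closedBall (0:Euc n) R⁻¹ ⊆ polarSet K :=
      closedBall_subset_polarSet hR0 hKR
    have hpolarK_ub : polarSet K ⊆ closedBall (0:Euc n) (ε/2)⁻¹ :=
      polarSet_subset_closedBall hr0 hrK
    have hVfin : volume (polarSet K) < ⊤ :=
      lt_of_le_of_lt (measure_mono hpolarK_ub) measure_closedBall_lt_top
    have hVpos : 0 < V := by
      apply ENNReal.toReal_pos _ (ne_of_lt hVfin)
      apply ne_of_gt
      exact lt_of_lt_of_le (measure_closedBall_pos volume _ (by positivity))
        (measure_mono hpolarK_lb)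
    have hev : ∀ᶠ p : ℝ in atTop,
        (p / Real.log p) * (((((1 - tlog p)^p + A * tlog p) ^ (1/p))⁻¹)^n - 1) * V ≤
          (p / Real.log p) * ((volume (polarSet (ZpBody K p))).toReal - V) ∧
        (p / Real.log p) * ((volume (polarSet (ZpBody K p))).toReal - V) ≤
          (p / Real.log p) * ((((1 - 2/p) * (1/p) ^ ((n:ℝ)/p))⁻¹)^n - 1) * V := by
      filter_upwards [eventually_ge_atTop (4:ℝ), Real.tendsto_log_atTop.eventually_ge_atTop 1,
        tlog_tendsto.eventually_lt_const (by norm_num : (0:ℝ) < 1/2)] with p hp4 hlog ht2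
      have hp0 : (0:ℝ) < p := by linarith
      have hp1 : (1:ℝ) ≤ p := by linarith
      have hlp : (0:ℝ) < Real.log p := lt_of_lt_of_le one_pos hlog
      have ht0 : 0 < tlog p := by rw [tlog]; positivity
      set β : ℝ := ((1 - tlog p)^p + A * tlog p) ^ (1/p) with hβ
      set α : ℝ := (1 - 2/p) * (1/p) ^ ((n:ℝ)/p) with hα
      have hBpos : 0 < (1 - tlog p)^p + A * tlog p := by
        have h1 : (0:ℝ) ≤ (1 - tlog p)^p := Real.rpow_nonneg (by linarith) p
        nlinarith
      have hβpos : 0 < β := Real.rpow_pos_of_pos hBpos _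
      have h2p : (2:ℝ)/p ≤ 1/2 := by
        rw [div_le_div_iff₀ hp0 (by norm_num)]
        linarith
      have hαpos : 0 < α := by
        apply mul_pos (by linarith)
        exact Real.rpow_pos_of_pos (by positivity) _
      have hUb : ∀ θ : Euc n, ‖θ‖ = 1 →
          (∫ x in K, |⟪x, θ⟫| ^ p) ^ (1/p) ≤ β * suppFn K θ := by
        intro θ hθ
        have hm0 : 0 ≤ suppFn K θ := suppFn_nonneg hcomp hK0 θ
        have h1 := integral_upper hn hcomp hK0 hsymm hvol (le_of_lt hR1) hKR hp1 ht0 ht2 θ hθ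
        have h2 : (∫ x in K, |⟪x, θ⟫| ^ p) ^ (1/p) ≤
            ((suppFn K θ)^p * ((1 - tlog p)^p + A * tlog p)) ^ (1/p) :=
          Real.rpow_le_rpow (integral_nonneg (fun x => Real.rpow_nonneg (abs_nonneg _) p))
            h1 (by positivity)
        calc (∫ x in K, |⟪x, θ⟫| ^ p) ^ (1/p) ≤
            ((suppFn K θ)^p * ((1 - tlog p)^p + A * tlog p)) ^ (1/p) := h2
          _ = (suppFn K θ) * β := by
              rw [Real.mul_rpow (Real.rpow_nonneg hm0 p) hBpos.le,
                ← Real.rpow_mul hm0, mul_one_div_cancel (ne_of_gt hp0), Real.rpow_one, hβ]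
          _ = β * suppFn K θ := mul_comm _ _
      have hAllU := bound_all_upper hcomp hK0 hp1 hβpos.le hUb
      have hZsub : ZpBody K p ⊆ β • K :=
        ZpBody_subset_smul hconv hcomp hK0 hβpos hAllU
      have hLb : ∀ θ : Euc n, ‖θ‖ = 1 →
          α * suppFn K θ ≤ (∫ x in K, |⟪x, θ⟫| ^ p) ^ (1/p) := by
        intro θ hθ
        have hm0 : 0 ≤ suppFn K θ := suppFn_nonneg hcomp hK0 θ
        have hinvp0 : (0:ℝ) < 1/p := by positivity
        have hs1 : (1:ℝ)/p ≤ 1/2 := one_div_le_one_div_of_le (by norm_num) (by linarith)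
        have h1 := integral_lower hconv hcomp hK0 hsymm hvol hp1 hinvp0 hs1 θ hθ
        have h2p' : (0:ℝ) ≤ 1 - 2*(1/p) := by
          rw [mul_one_div]
          linarith
        have hq0 : (0:ℝ) ≤ 1/p := hinvp0.le
        have e1 : ((1 - 2*(1/p)) ^ p) ^ (1/p) = 1 - 2*(1/p) := by
          rw [← Real.rpow_mul h2p', mul_one_div_cancel (ne_of_gt hp0), Real.rpow_one]
        have e2 : (((1:ℝ)/p) ^ n) ^ ((1:ℝ)/p) = (1/p) ^ ((n:ℝ)/p) := by
          rw [← Real.rpow_natCast ((1:ℝ)/p) n, ← Real.rpow_mul hq0]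
          congr 1
          rw [mul_one_div]
        have hαm : ((suppFn K θ) ^ p * ((1 - 2*(1/p)) ^ p * (1/p) ^ n)) ^ (1/p)
            = α * suppFn K θ := by
          rw [Real.mul_rpow (Real.rpow_nonneg hm0 p)
              (mul_nonneg (Real.rpow_nonneg h2p' p) (pow_nonneg hq0 n)),
            Real.mul_rpow (Real.rpow_nonneg h2p' p) (pow_nonneg hq0 n),
            e1, e2, ← Real.rpow_mul hm0, mul_one_div_cancel (ne_of_gt hp0), Real.rpow_one,
            hα, mul_one_div]
          ring
        calc α * suppFn K θ
            = ((suppFn K θ) ^ p * ((1 - 2*(1/p)) ^ p * (1/p) ^ n)) ^ (1/p) := hαm.symm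
          _ ≤ (∫ x in K, |⟪x, θ⟫| ^ p) ^ (1/p) :=
              Real.rpow_le_rpow (mul_nonneg (Real.rpow_nonneg hm0 p)
                (mul_nonneg (Real.rpow_nonneg h2p' p) (pow_nonneg hq0 n))) h1 hq0
      have hAllL := bound_all_lower hcomp hK0 hp1 hαpos.le hLb
      have hZsup : α • K ⊆ ZpBody K p := smul_subset_ZpBody hcomp hαpos.le hAllL
      have hvolU : volume (polarSet (ZpBody K p)) ≤
          ENNReal.ofReal (α⁻¹ ^ n) * volume (polarSet K) := by
        have h1 : polarSet (ZpBody K p) ⊆ α⁻¹ • polarSet K := by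
          rw [← polarSet_smul hαpos]
          exact polarSet_anti hZsup
        calc volume (polarSet (ZpBody K p)) ≤ volume (α⁻¹ • polarSet K) := measure_mono h1
          _ = ENNReal.ofReal (α⁻¹ ^ n) * volume (polarSet K) :=
              volume_smul_set _ (by positivity)
      have hvolL : ENNReal.ofReal (β⁻¹ ^ n) * volume (polarSet K) ≤
          volume (polarSet (ZpBody K p)) := by
        have h1 : β⁻¹ • polarSet K ⊆ polarSet (ZpBody K p) := by
          rw [← polarSet_smul hβpos]
          exact polarSet_anti hZsub
        calc ENNReal.ofReal (β⁻¹ ^ n) * volume (polarSet K)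
            = volume (β⁻¹ • polarSet K) := (volume_smul_set _ (by positivity)).symm
          _ ≤ volume (polarSet (ZpBody K p)) := measure_mono h1
      have hZfin : volume (polarSet (ZpBody K p)) ≠ ⊤ :=
        ne_of_lt (lt_of_le_of_lt hvolU (ENNReal.mul_lt_top ENNReal.ofReal_lt_top hVfin))
      have htUb : (volume (polarSet (ZpBody K p))).toReal ≤ α⁻¹ ^ n * V := by
        have h := ENNReal.toReal_mono
          (ENNReal.mul_ne_top ENNReal.ofReal_ne_top (ne_of_lt hVfin)) hvolU
        rwa [ENNReal.toReal_mul, ENNReal.toReal_ofReal (by positivity), ← hV] at h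
      have htLb : β⁻¹ ^ n * V ≤ (volume (polarSet (ZpBody K p))).toReal := by
        have h := ENNReal.toReal_mono hZfin hvolL
        rwa [ENNReal.toReal_mul, ENNReal.toReal_ofReal (by positivity), ← hV] at h
      have hplog : (0:ℝ) ≤ p / Real.log p := by positivity
      constructor
      · have h := mul_le_mul_of_nonneg_left (sub_le_sub_right htLb V) hplog
        calc (p / Real.log p) * ((β⁻¹)^n - 1) * V
            = (p / Real.log p) * (β⁻¹ ^ n * V - V) := by ring
          _ ≤ (p / Real.log p) * ((volume (polarSet (ZpBody K p))).toReal - V) := h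
      · have h := mul_le_mul_of_nonneg_left (sub_le_sub_right htUb V) hplog
        calc (p / Real.log p) * ((volume (polarSet (ZpBody K p))).toReal - V)
            ≤ (p / Real.log p) * (α⁻¹ ^ n * V - V) := h
          _ = (p / Real.log p) * ((α⁻¹)^n - 1) * V := by ring
    have hL : Tendsto (fun p : ℝ => (p / Real.log p) *
        (((((1 - tlog p)^p + A * tlog p) ^ (1/p))⁻¹)^n - 1) * V) atTop (𝓝 ((n:ℝ) * V)) :=
      (tendsto_LB n A hA1).mul_const V
    have hU : Tendsto (fun p : ℝ => (p / Real.log p) *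
        ((((1 - 2/p) * (1/p) ^ ((n:ℝ)/p))⁻¹)^n - 1) * V) atTop (𝓝 ((n:ℝ)^2 * V)) :=
      (tendsto_LA n).mul_const V
    have hfbddbelow : IsBoundedUnder (· ≥ ·) atTop (fun p : ℝ => (p / Real.log p) *
        ((volume (polarSet (ZpBody K p))).toReal - V)) := by
      apply isBoundedUnder_of_eventually_ge (a := (n:ℝ) * V - 1)
      filter_upwards [hev,
        hL.eventually (eventually_ge_nhds (by linarith : (n:ℝ)*V - 1 < (n:ℝ)*V))]
        with p hp hLp
      exact le_trans hLp hp.1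
    have hfbddabove : IsBoundedUnder (· ≤ ·) atTop (fun p : ℝ => (p / Real.log p) *
        ((volume (polarSet (ZpBody K p))).toReal - V)) := by
      apply isBoundedUnder_of_eventually_le (a := (n:ℝ)^2 * V + 1)
      filter_upwards [hev,
        hU.eventually (eventually_le_nhds (by linarith : (n:ℝ)^2*V < (n:ℝ)^2*V + 1))]
        with p hp hUp
      exact le_trans hp.2 hUp
    constructor
    · rw [show (n:ℝ) * V = liminf (fun p : ℝ => (p / Real.log p) *
          (((((1 - tlog p)^p + A * tlog p) ^ (1/p))⁻¹)^n - 1) * V) atTop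
        from hL.liminf_eq.symm]
      exact liminf_le_liminf (hev.mono fun p hp => hp.1)
        (hL.isBoundedUnder_ge) (hfbddabove.isCoboundedUnder_ge)
    · rw [show (n:ℝ)^2 * V = limsup (fun p : ℝ => (p / Real.log p) *
          ((((1 - 2/p) * (1/p) ^ ((n:ℝ)/p))⁻¹)^n - 1) * V) atTop
        from hU.limsup_eq.symm]
      exact limsup_le_limsup (hev.mono fun p hp => hp.2)
        (hfbddbelow.isCoboundedUnder_le) (hU.isBoundedUnder_le)
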